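/- Let a ∈ (ℂˣ)^m and S ⊆ {1,…,m}. If W ∈ Mat₂(ℂ[h]) satisfies W·E_i^{(a,S)} = E_i^{(a,S)}·Δ_i⁻¹(W) and W·F_i^{(a,S)} = F_i^{(a,S)}·Δ_i(W) for all i ∈ {1,…,m}, then there exists a one-variable polynomial F ∈ ℂ[T] such that W = [[F(h₁+⋯+h_m+m−1), 0],[0, F(h₁+⋯+h_m)]], where F(p) denotes the evaluation of F at the element p ∈ ℂ[h]. -/

import Mathlib

open MvPolynomial

/-- The shift automorphism of `ℂ[h₁,…]` sending `h_i ↦ h_i + c i`. -/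
noncomputable def shiftAut {ι : Type*} (c : ι → ℂ) :
    MvPolynomial ι ℂ ≃ₐ[ℂ] MvPolynomial ι ℂ :=
  AlgEquiv.ofAlgHom
    (aeval fun i => X i + C (c i))
    (aeval fun i => X i - C (c i))
    (by ext i : 1; simp)
    (by ext i : 1; simp)

/-- The automorphism `σ_i` of `ℂ[h₁,…,h_m]` with `σ_i(h_i) = h_i - 1`, `σ_i(h_j) = h_j` (j ≠ i). -/
noncomputable def sig (m : ℕ) (i : Fin m) :
    MvPolynomial (Fin m) ℂ ≃ₐ[ℂ] MvPolynomial (Fin m) ℂ :=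
  shiftAut (fun j => if j = i then (-1 : ℂ) else 0)

/-- The automorphism `Δ = σ₁∘⋯∘σ_m`, i.e. `Δ(h_i) = h_i - 1` for all `i`. -/
noncomputable def Del (m : ℕ) :
    MvPolynomial (Fin m) ℂ ≃ₐ[ℂ] MvPolynomial (Fin m) ℂ :=
  shiftAut (fun _ : Fin m => (-1 : ℂ))

/-- The automorphism `Δ_i = σ_i⁻¹ ∘ Δ`. -/
noncomputable def Deli (m : ℕ) (i : Fin m) :
    MvPolynomial (Fin m) ℂ ≃ₐ[ℂ] MvPolynomial (Fin m) ℂ :=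
  (Del m).trans (sig m i).symm

/-- Normal-form matrix `E_i^{(a,S)}`. -/
noncomputable def Emat (m : ℕ) (a : Fin m → ℂˣ) (S : Finset (Fin m)) (i : Fin m) :
    Matrix (Fin 2) (Fin 2) (MvPolynomial (Fin m) ℂ) :=
  if i ∈ S then !![0, C ((a i : ℂ)) * X i; 0, 0] else !![0, C ((a i : ℂ)); 0, 0]

/-- Normal-form matrix `F_i^{(a,S)}`. -/
noncomputable def Fmat (m : ℕ) (a : Fin m → ℂˣ) (S : Finset (Fin m)) (i : Fin m) :
    Matrix (Fin 2) (Fin 2) (MvPolynomial (Fin m) ℂ) :=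
  if i ∈ S then !![0, 0; C (((a i)⁻¹ : ℂˣ) : ℂ), 0]
  else !![0, 0; C (((a i)⁻¹ : ℂˣ) : ℂ) * X i, 0]


variable {ι : Type*}

lemma shiftAut_X (c : ι → ℂ) (i : ι) : shiftAut c (X i) = X i + C (c i) := by
  simp [shiftAut]

lemma shiftAut_C (c : ι → ℂ) (r : ℂ) : shiftAut c (C r) = C r := by
  simp [shiftAut]

lemma shiftAut_comp (c d : ι → ℂ) (p : MvPolynomial ι ℂ) :
    shiftAut d (shiftAut c p) = shiftAut (c + d) p := by
  have h : ((shiftAut d).toAlgHom.comp (shiftAut c).toAlgHom) = (shiftAut (c + d)).toAlgHom := by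
    apply MvPolynomial.algHom_ext
    intro i
    simp [shiftAut_X, shiftAut_C, map_add]
    ring
  exact AlgHom.congr_fun h p

lemma shiftAut_zero' (p : MvPolynomial ι ℂ) : shiftAut (0 : ι → ℂ) p = p := by
  have h0 : (shiftAut (0 : ι → ℂ)).toAlgHom = AlgHom.id ℂ (MvPolynomial ι ℂ) := by
    apply MvPolynomial.algHom_ext
    intro i
    simp [shiftAut_X]
  exact AlgHom.congr_fun h0 p

lemma subst_of_shift_inv (δ : ι → ℂ) (P : MvPolynomial ι ℂ)
    (h : shiftAut δ P = P) (t : MvPolynomial ι ℂ) :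
    aeval (fun k => X k + C (δ k) * t) P = P := by
  have hiter : ∀ n : ℕ, shiftAut ((n : ℂ) • δ) P = P := by
    intro n
    induction n with
    | zero => simpa using shiftAut_zero' P
    | succ n ih =>
        have hc : ((n+1 : ℕ):ℂ) • δ = δ + (n:ℂ) • δ := by
          funext j; push_cast; simp [add_mul, one_mul]; ring
        rw [hc, ← shiftAut_comp, h, ih]
  set Φ : MvPolynomial ι ℂ →ₐ[ℂ] Polynomial (MvPolynomial ι ℂ) :=
    aeval (fun k => Polynomial.C (X k) + Polynomial.C (C (δ k)) * Polynomial.X) with hΦ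
  have heval : ∀ (s : MvPolynomial ι ℂ) (p : MvPolynomial ι ℂ),
      Polynomial.eval s (Φ p) = aeval (fun k => X k + C (δ k) * s) p := by
    intro s p
    have key : (Polynomial.evalRingHom s).comp Φ.toRingHom
        = (aeval (fun k => X k + C (δ k) * s) : MvPolynomial ι ℂ →ₐ[ℂ] _).toRingHom := by
      apply MvPolynomial.ringHom_ext
      · intro r; simp [hΦ]
      · intro i; simp [hΦ]
    exact RingHom.congr_fun key p
  have hshift : ∀ n : ℕ,
      aeval (fun k => X k + C (δ k) * (C (n:ℂ) : MvPolynomial ι ℂ)) P = P := by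
    intro n
    have h2 : ((shiftAut ((n:ℂ) • δ)).toAlgHom : MvPolynomial ι ℂ →ₐ[ℂ] MvPolynomial ι ℂ)
        = aeval (fun k => X k + C (δ k) * (C (n:ℂ) : MvPolynomial ι ℂ)) := by
      apply MvPolynomial.algHom_ext
      intro i
      rw [AlgEquiv.toAlgHom_eq_coe, AlgEquiv.coe_toAlgHom, shiftAut_X]
      simp [aeval_X, ← C_mul, mul_comm]
    have := AlgHom.congr_fun h2 P
    rw [AlgEquiv.toAlgHom_eq_coe, AlgEquiv.coe_toAlgHom] at this
    rw [← this, hiter]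
  have hq : Φ P - Polynomial.C P = 0 := by
    apply Polynomial.eq_zero_of_infinite_isRoot
    apply Set.infinite_of_injective_forall_mem
      (f := fun n : ℕ => (C (n:ℂ) : MvPolynomial ι ℂ))
    · intro n k hnk
      have := MvPolynomial.C_injective ι ℂ hnk
      exact_mod_cast this
    · intro n
      simp only [Set.mem_setOf_eq, Polynomial.IsRoot, Polynomial.eval_sub,
        Polynomial.eval_C, heval, hshift n, sub_self]
  have hΦP : Φ P = Polynomial.C P := by linear_combination (norm := ring_nf) hq
  rw [← heval t P, hΦP, Polynomial.eval_C]
lemma aeval_aeval {m : ℕ} (f g : Fin m → MvPolynomial (Fin m) ℂ) (p : MvPolynomial (Fin m) ℂ) :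
    aeval f (aeval g p) = aeval (fun k => aeval f (g k)) p := by
  have h : ((aeval f : MvPolynomial (Fin m) ℂ →ₐ[ℂ] _).comp (aeval g))
      = aeval (fun k => aeval f (g k)) := by
    apply MvPolynomial.algHom_ext; intro i; simp
  exact AlgHom.congr_fun h p

lemma collapse {m : ℕ} [NeZero m] (P : MvPolynomial (Fin m) ℂ)
    (hinv : ∀ i : Fin m, i ≠ 0 →
      shiftAut (fun k => if k = 0 then 1 else if k = i then (-1:ℂ) else 0) P = P) :
    aeval (fun k : Fin m => if k = 0 then (∑ j, X j : MvPolynomial (Fin m) ℂ) else 0) P = P := by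
  have hpsi : ∀ i : Fin m, i ≠ 0 →
      aeval (fun k : Fin m => if k = 0 then (X 0 + X i : MvPolynomial (Fin m) ℂ) else if k = i then 0 else X k) P = P := by
    intro i hi
    have h1 := subst_of_shift_inv _ P (hinv i hi) (X i)
    have hfun : (fun k : Fin m => X k + C (if k = 0 then 1 else if k = i then (-1:ℂ) else 0) * X i)
        = (fun k : Fin m => if k = 0 then (X 0 + X i : MvPolynomial (Fin m) ℂ) else if k = i then 0 else X k) := by
      funext k
      by_cases hk0 : k = 0
      · subst hk0; simp
      · by_cases hki : k = i
        · subst hki; simp [hk0]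
        · simp [hk0, hki]
    rw [hfun] at h1
    exact h1
  -- finset induction
  have hstep : ∀ s : Finset (Fin m), (0 : Fin m) ∉ s →
      aeval (fun k : Fin m => if k = 0 then (X 0 + ∑ j ∈ s, X j : MvPolynomial (Fin m) ℂ)
        else if k ∈ s then 0 else X k) P = P := by
    intro s
    induction s using Finset.induction_on with
    | empty =>
        intro _
        have hfun : (fun k : Fin m => if k = 0 then (X 0 + ∑ j ∈ (∅ : Finset (Fin m)), X j : MvPolynomial (Fin m) ℂ)
            else if k ∈ (∅ : Finset (Fin m)) then 0 else X k) = X := by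
          funext k; by_cases hk : k = 0 <;> simp [hk]
        rw [hfun, aeval_X_left_apply]
    | @insert i s hni ih =>
        intro h0
        have hi0 : i ≠ 0 := by rintro rfl; exact h0 (Finset.mem_insert_self 0 s)
        have h0s : (0 : Fin m) ∉ s := fun hh => h0 (Finset.mem_insert_of_mem hh)
        have key : aeval (fun k : Fin m => if k = 0 then (X 0 + ∑ j ∈ insert i s, X j : MvPolynomial (Fin m) ℂ)
            else if k ∈ insert i s then 0 else X k) P
            = aeval (fun k : Fin m => if k = 0 then (X 0 + ∑ j ∈ s, X j : MvPolynomial (Fin m) ℂ)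
                else if k ∈ s then 0 else X k)
              (aeval (fun k : Fin m => if k = 0 then (X 0 + X i : MvPolynomial (Fin m) ℂ) else if k = i then 0 else X k) P) := by
          rw [aeval_aeval]
          have hfun : (fun k : Fin m =>
              aeval (fun k : Fin m => if k = 0 then (X 0 + ∑ j ∈ s, X j : MvPolynomial (Fin m) ℂ)
                else if k ∈ s then 0 else X k)
              (if k = 0 then (X 0 + X i : MvPolynomial (Fin m) ℂ) else if k = i then 0 else X k))
              = (fun k : Fin m => if k = 0 then (X 0 + ∑ j ∈ insert i s, X j : MvPolynomial (Fin m) ℂ)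
                else if k ∈ insert i s then 0 else X k) := by
            funext k
            by_cases hk0 : k = 0
            · subst hk0
              rw [if_pos rfl, if_pos rfl, map_add, aeval_X, aeval_X, if_pos rfl,
                if_neg hi0, if_neg hni, Finset.sum_insert hni]
              ring
            · by_cases hki : k = i
              · subst hki
                simp [hk0, Finset.mem_insert_self]
              · rw [if_neg hk0, if_neg hki, aeval_X]
                simp [Finset.mem_insert, hki, hk0]
          rw [hfun]
        rw [key, hpsi i hi0, ih h0s]
  have hfin := hstep (Finset.univ.erase 0) (Finset.notMem_erase 0 _)
  have hfun : (fun k : Fin m => if k = 0 then (X 0 + ∑ j ∈ Finset.univ.erase 0, X j : MvPolynomial (Fin m) ℂ)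
      else if k ∈ Finset.univ.erase 0 then 0 else X k)
      = (fun k : Fin m => if k = 0 then (∑ j, X j : MvPolynomial (Fin m) ℂ) else 0) := by
    funext k
    by_cases hk0 : k = 0
    · subst hk0
      rw [if_pos rfl, if_pos rfl, Finset.add_sum_erase Finset.univ X (Finset.mem_univ 0)]
    · simp [hk0]
  rw [hfun] at hfin
  exact hfin


lemma shiftAut_congr {ι : Type*} {c d : ι → ℂ} (h : c = d) (p : MvPolynomial ι ℂ) :
    shiftAut c p = shiftAut d p := by rw [h]

lemma shiftAut_symm {ι : Type*} (c : ι → ℂ) (p : MvPolynomial ι ℂ) :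
    (shiftAut c).symm p = shiftAut (-c) p := by
  apply (shiftAut c).injective
  rw [AlgEquiv.apply_symm_apply, shiftAut_comp]
  simp [shiftAut_zero']

lemma Deli_eq (m : ℕ) (i : Fin m) (p : MvPolynomial (Fin m) ℂ) :
    Deli m i p = shiftAut (fun j => if j = i then 0 else (-1 : ℂ)) p := by
  show (sig m i).symm (Del m p) = _
  rw [Del, sig, shiftAut_symm, shiftAut_comp]
  apply shiftAut_congr
  funext j
  by_cases h : j = i <;> simp [h]

/-- Every endomorphism-defining matrix `W` intertwining the normal-form matrices is diagonal of
the form `[[F(h₁+⋯+h_m+m−1), 0],[0, F(h₁+⋯+h_m)]]` for a one-variable polynomial `F`. -/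
theorem stmt_13 (m : ℕ) (hm : 2 ≤ m) (a : Fin m → ℂˣ) (S : Finset (Fin m))
    (W : Matrix (Fin 2) (Fin 2) (MvPolynomial (Fin m) ℂ))
    (hE : ∀ i, W * Emat m a S i = Emat m a S i * W.map ⇑(Deli m i).symm)
    (hF : ∀ i, W * Fmat m a S i = Fmat m a S i * W.map ⇑(Deli m i)) :
    ∃ F : Polynomial ℂ,
      W = !![Polynomial.aeval ((∑ i, X i) + C ((m : ℂ) - 1)) F, 0;
             0, Polynomial.aeval (∑ i, (X i : MvPolynomial (Fin m) ℂ)) F] := by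
  haveI : NeZero m := ⟨by omega⟩
  -- Step 1: extract entry relations
  have h01 : W 0 1 = 0 := by
    have h := Matrix.ext_iff.2 (hF 0) 0 0
    by_cases hiS : (0 : Fin m) ∈ S <;>
    · simp [Matrix.mul_apply, Fin.sum_univ_two, Fmat, hiS, Matrix.map_apply] at h
      exact h
  have h10 : W 1 0 = 0 := by
    have h := Matrix.ext_iff.2 (hE 0) 0 0
    by_cases hiS : (0 : Fin m) ∈ S <;>
    · simp [Matrix.mul_apply, Fin.sum_univ_two, Emat, hiS, Matrix.map_apply] at h
      exact h
  have hdiag : ∀ i, W 1 1 = Deli m i (W 0 0) := by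
    intro i
    have h := Matrix.ext_iff.2 (hF i) 1 0
    have hb : (C (((a i : ℂ))⁻¹) : MvPolynomial (Fin m) ℂ) ≠ 0 := by
      intro hc
      have := MvPolynomial.C_injective (Fin m) ℂ (by rw [hc, map_zero] : C (((a i : ℂ))⁻¹) = C 0)
      exact inv_ne_zero (Units.ne_zero (a i)) this
    have hX : (X i : MvPolynomial (Fin m) ℂ) ≠ 0 := MvPolynomial.X_ne_zero i
    by_cases hiS : i ∈ S
    · simp [Matrix.mul_apply, Fin.sum_univ_two, Fmat, hiS, Matrix.map_apply] at h
      exact mul_left_cancel₀ hb (by linear_combination h)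
    · simp [Matrix.mul_apply, Fin.sum_univ_two, Fmat, hiS, Matrix.map_apply] at h
      exact mul_left_cancel₀ (mul_ne_zero hb hX) (by linear_combination h)
  -- Step 2: invariance of P = W 0 0
  set P : MvPolynomial (Fin m) ℂ := W 0 0 with hP
  have hinv : ∀ i : Fin m, i ≠ 0 →
      shiftAut (fun k => if k = 0 then 1 else if k = i then (-1:ℂ) else 0) P = P := by
    intro i hi
    have h1 : Deli m i P = Deli m 0 P := by rw [← hdiag i, ← hdiag 0]
    apply (Deli m i).injective
    calc Deli m i (shiftAut (fun k => if k = 0 then 1 else if k = i then (-1:ℂ) else 0) P)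
        = shiftAut ((fun k => if k = 0 then 1 else if k = i then (-1:ℂ) else 0)
            + (fun j => if j = i then 0 else (-1:ℂ))) P := by
          rw [Deli_eq]; exact shiftAut_comp _ _ P
      _ = shiftAut (fun j => if j = (0 : Fin m) then 0 else (-1:ℂ)) P := by
          apply shiftAut_congr
          funext k
          by_cases hk0 : k = 0
          · subst hk0; simp [Ne.symm hi]
          · by_cases hki : k = i
            · subst hki; simp [hk0]
            · simp [hk0, hki]
      _ = Deli m 0 P := (Deli_eq m 0 P).symm
      _ = Deli m i P := h1.symm
  have hcol := collapse P hinv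
  -- Step 3: define the one-variable polynomials
  set G : Polynomial ℂ :=
    aeval (fun k : Fin m => if k = 0 then Polynomial.X else (0 : Polynomial ℂ)) P with hG
  have hGs : ∀ s : MvPolynomial (Fin m) ℂ,
      Polynomial.aeval s G = aeval (fun k : Fin m => if k = 0 then s else 0) P := by
    intro s
    have h : ((Polynomial.aeval s : Polynomial ℂ →ₐ[ℂ] MvPolynomial (Fin m) ℂ).comp
        (aeval (fun k : Fin m => if k = 0 then Polynomial.X else (0 : Polynomial ℂ))))
        = aeval (fun k : Fin m => if k = 0 then s else 0) := by
      apply MvPolynomial.algHom_ext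
      intro k
      by_cases hk : k = 0 <;> simp [hk]
    exact AlgHom.congr_fun h P
  have hPG : P = Polynomial.aeval (∑ j, (X j : MvPolynomial (Fin m) ℂ)) G := by
    rw [hGs]; exact hcol.symm
  set F : Polynomial ℂ := G.comp (Polynomial.X - Polynomial.C ((m:ℂ) - 1)) with hFdef
  have hFs : ∀ s : MvPolynomial (Fin m) ℂ,
      Polynomial.aeval s F = Polynomial.aeval (s - C ((m:ℂ) - 1)) G := by
    intro s
    rw [hFdef, Polynomial.aeval_comp]
    congr 1
    rw [map_sub, Polynomial.aeval_X, Polynomial.aeval_C, MvPolynomial.algebraMap_eq]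
  -- sum of shift constants
  have hsum : (∑ j : Fin m, (if j = (0 : Fin m) then (0:ℂ) else -1)) = -((m:ℂ) - 1) := by
    have : ∀ j : Fin m, (if j = (0 : Fin m) then (0:ℂ) else -1)
        = (if j = (0 : Fin m) then (1:ℂ) else 0) + (-1) := by
      intro j; by_cases h : j = 0 <;> simp [h]
    rw [Finset.sum_congr rfl (fun j _ => this j), Finset.sum_add_distrib]
    simp [Finset.sum_ite_eq', Finset.card_univ]
    ring
  have hDelSum : Deli m 0 (∑ j, (X j : MvPolynomial (Fin m) ℂ))
      = (∑ j, (X j : MvPolynomial (Fin m) ℂ)) - C ((m:ℂ) - 1) := by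
    rw [Deli_eq, map_sum]
    have : ∀ j : Fin m, shiftAut (fun j : Fin m => if j = 0 then 0 else (-1:ℂ)) (X j)
        = X j + C (if j = (0 : Fin m) then (0:ℂ) else -1) := fun j => shiftAut_X _ j
    rw [Finset.sum_congr rfl (fun j _ => this j), Finset.sum_add_distrib, ← map_sum, hsum]
    rw [map_neg]
    ring
  refine ⟨F, ?_⟩
  have hW00 : W 0 0 = Polynomial.aeval ((∑ j, (X j : MvPolynomial (Fin m) ℂ)) + C ((m:ℂ) - 1)) F := by
    rw [hFs, add_sub_cancel_right, ← hPG]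
  have hW11 : W 1 1 = Polynomial.aeval (∑ j, (X j : MvPolynomial (Fin m) ℂ)) F := by
    rw [hFs, hGs, hdiag 0]
    conv_lhs => rw [← hcol]
    have hcomp := AlgHom.congr_fun (MvPolynomial.comp_aeval
      (f := fun k : Fin m => if k = 0 then (∑ j, (X j : MvPolynomial (Fin m) ℂ)) else 0)
      (φ := (Deli m 0).toAlgHom)) P
    rw [AlgHom.comp_apply] at hcomp
    rw [AlgEquiv.toAlgHom_eq_coe, AlgEquiv.coe_toAlgHom] at hcomp
    rw [hcomp]
    have hf : (fun i : Fin m => Deli m 0 (if i = 0 then (∑ j, (X j : MvPolynomial (Fin m) ℂ)) else 0))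
        = (fun k : Fin m => if k = 0 then (∑ j, (X j : MvPolynomial (Fin m) ℂ)) - C ((m:ℂ) - 1) else 0) := by
      funext k
      by_cases hk : k = 0
      · subst hk; simp only [if_pos rfl]; exact hDelSum
      · simp [hk]
    rw [hf]
  ext i j
  fin_cases i <;> fin_cases j <;>
    simp [hW00, hW11, h01, h10]
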